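/- Let gᵢ ∈ ℝᵈ for i = 1,…,n, of which an outlier subset O of size n_O has gᵢ = vᵢ + hᵢ with (1/n_O)·Σ_{i∈O} hᵢ = 0, and for the inlier set gᵢ = vᵢ. Let ḡ = (1/n)Σᵢ vᵢ and assume for each outlier i, ‖hᵢ‖ ≥ ‖vᵢ‖ and ‖hᵢ‖ ≥ 1. Then for a uniformly random index i: E_i[‖η·gᵢ - η·ḡ‖²] ≤ η²·E_i[‖vᵢ‖²] - η²‖ḡ‖² + 3η²·(n_O/n)·(1/n_O)·Σ_{i∈O}‖hᵢ‖². -/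

import Mathlib

open Finset

/-- Variance bound for SGD with batch size one under zero-mean additive outlier
perturbations (Lemma on variance in updates). -/
theorem stmt_12 (n d nO : ℕ) (hn : 0 < n) (hnO : 0 < nO)
    (O : Finset (Fin n)) (hOcard : O.card = nO)
    (g v h : Fin n → EuclideanSpace ℝ (Fin d))
    (η : ℝ) (hη : 0 < η)
    (hout : ∀ i ∈ O, g i = v i + h i)
    (hin : ∀ i ∉ O, g i = v i)
    (hzero : (1 / (nO : ℝ)) • ∑ i ∈ O, h i = 0)
    (gbar : EuclideanSpace ℝ (Fin d))
    (hgbar : gbar = (1 / (n : ℝ)) • ∑ i, v i)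
    (hlow1 : ∀ i ∈ O, ‖v i‖ ≤ ‖h i‖)
    (hlow2 : ∀ i ∈ O, (1:ℝ) ≤ ‖h i‖) :
    (1 / (n : ℝ)) * ∑ i, ‖η • g i - η • gbar‖ ^ 2
      ≤ η ^ 2 * ((1 / (n : ℝ)) * ∑ i, ‖v i‖ ^ 2) - η ^ 2 * ‖gbar‖ ^ 2
        + 3 * η ^ 2 * ((nO : ℝ) / (n : ℝ)) * ((1 / (nO : ℝ)) * ∑ i ∈ O, ‖h i‖ ^ 2) := by
  have hn' : (n : ℝ) ≠ 0 := Nat.cast_ne_zero.mpr hn.ne'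
  have hnO' : (nO : ℝ) ≠ 0 := Nat.cast_ne_zero.mpr hnO.ne'
  have hsumh : ∑ i ∈ O, h i = 0 := by
    rcases smul_eq_zero.mp hzero with h1 | h2
    · exact absurd h1 (one_div_ne_zero hnO')
    · exact h2
  -- sum of g equals n • gbar
  have hsumg : ∑ i, g i = (n : ℝ) • gbar := by
    have h1 : ∑ i, g i = ∑ i, v i := by
      rw [← Finset.sum_add_sum_compl O g, ← Finset.sum_add_sum_compl O v,
        Finset.sum_congr rfl hout,
        Finset.sum_congr rfl (fun i hi => hin i (Finset.mem_compl.mp hi)),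
        Finset.sum_add_distrib, hsumh, add_zero]
    rw [h1, hgbar, smul_smul, mul_one_div, div_self hn', one_smul]
  -- variance identity
  have key : ∑ i, ‖g i - gbar‖ ^ 2
      = ∑ i, ‖g i‖ ^ 2 - (n : ℝ) * ‖gbar‖ ^ 2 := by
    have expand : ∀ i : Fin n, ‖g i - gbar‖ ^ 2
        = ‖g i‖ ^ 2 - 2 * (inner ℝ (g i) gbar : ℝ) + ‖gbar‖ ^ 2 := by
      intro i
      rw [norm_sub_sq_real]
    rw [Finset.sum_congr rfl (fun i _ => expand i), Finset.sum_add_distrib,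
      Finset.sum_sub_distrib, ← Finset.mul_sum, ← sum_inner, hsumg,
      real_inner_smul_left, real_inner_self_eq_norm_sq, Finset.sum_const,
      Finset.card_univ, Fintype.card_fin, nsmul_eq_mul]
    ring
  -- bound on sum of ‖g i‖²
  have gbound : ∑ i, ‖g i‖ ^ 2 ≤ ∑ i, ‖v i‖ ^ 2 + 3 * ∑ i ∈ O, ‖h i‖ ^ 2 := by
    rw [← Finset.sum_add_sum_compl O (fun i => ‖g i‖ ^ 2),
      ← Finset.sum_add_sum_compl O (fun i => ‖v i‖ ^ 2)]
    have hc : ∑ i ∈ Oᶜ, ‖g i‖ ^ 2 = ∑ i ∈ Oᶜ, ‖v i‖ ^ 2 :=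
      Finset.sum_congr rfl fun i hi => by rw [hin i (Finset.mem_compl.mp hi)]
    have hO : ∑ i ∈ O, ‖g i‖ ^ 2 ≤ ∑ i ∈ O, (‖v i‖ ^ 2 + 3 * ‖h i‖ ^ 2) := by
      refine Finset.sum_le_sum fun i hi => ?_
      rw [hout i hi, norm_add_sq_real]
      have h1 : (inner ℝ (v i) (h i) : ℝ) ≤ ‖v i‖ * ‖h i‖ := real_inner_le_norm _ _
      have h2 : ‖v i‖ * ‖h i‖ ≤ ‖h i‖ * ‖h i‖ :=
        mul_le_mul_of_nonneg_right (hlow1 i hi) (norm_nonneg _)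
      nlinarith [sq_nonneg ‖h i‖]
    rw [Finset.sum_add_distrib] at hO
    rw [hc, Finset.mul_sum]
    linarith
  -- rewrite LHS
  have hsmul : ∀ i : Fin n, ‖η • g i - η • gbar‖ ^ 2 = η ^ 2 * ‖g i - gbar‖ ^ 2 := by
    intro i
    rw [← smul_sub, norm_smul, Real.norm_eq_abs, abs_of_pos hη, mul_pow]
  have hLHS : (1 / (n : ℝ)) * ∑ i, ‖η • g i - η • gbar‖ ^ 2
      = η ^ 2 / n * (∑ i, ‖g i‖ ^ 2 - (n : ℝ) * ‖gbar‖ ^ 2) := by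
    rw [Finset.sum_congr rfl (fun i _ => hsmul i), ← Finset.mul_sum, key]
    ring
  rw [hLHS]
  have hRHS : η ^ 2 * ((1 / (n : ℝ)) * ∑ i, ‖v i‖ ^ 2) - η ^ 2 * ‖gbar‖ ^ 2
        + 3 * η ^ 2 * ((nO : ℝ) / (n : ℝ)) * ((1 / (nO : ℝ)) * ∑ i ∈ O, ‖h i‖ ^ 2)
      = η ^ 2 / n * (∑ i, ‖v i‖ ^ 2 + 3 * ∑ i ∈ O, ‖h i‖ ^ 2)
        - η ^ 2 * ‖gbar‖ ^ 2 := by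
    field_simp
    ring
  rw [hRHS]
  have hpos : (0 : ℝ) ≤ η ^ 2 / n := by positivity
  have := mul_le_mul_of_nonneg_left gbound hpos
  have hcancel : η ^ 2 / n * ((n : ℝ) * ‖gbar‖ ^ 2) = η ^ 2 * ‖gbar‖ ^ 2 := by
    field_simp
  nlinarith [this]
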